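/- There exist d̃ > 0 and M > 0 such that for every d ∈ (0, d̃), every δ > 0 and every p ∈ Ω with closure(B_δ(p)) ⊂ Ω and B_δ(p) ⊂ V_{d/4}, with coordinates normalized for p (so p = (0, p_y)), the set Top_{M,δ,d}(p) := {(x, p_y + δ + (3/2)d) : M x² ≤ (3/2)d} is contained in V_{2d} ∖ V_d; that is, every point z ∈ Top_{M,δ,d}(p) lies in Ω and satisfies d ≤ dist(z, ∂Ω) < 2d. -/

import Mathlib

open MeasureTheory Metric Set
open scoped InnerProductSpace

noncomputable section

abbrev E2 := EuclideanSpace ℝ (Fin 2)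

/-- The point `(a, b) ∈ ℝ²`. -/
def pt (a b : ℝ) : E2 := WithLp.toLp 2 ![a, b]

/-- The standard basis vector `e₁ = (1,0)`. -/
def e1v : E2 := EuclideanSpace.single 0 1

/-- The standard basis vector `e₂ = (0,1)`. -/
def e2v : E2 := EuclideanSpace.single 1 1

/-- The Laplacian `Δu = ∂²u/∂x² + ∂²u/∂y²`. -/
noncomputable def lap (u : E2 → ℝ) (z : E2) : ℝ :=
  fderiv ℝ (fun w => fderiv ℝ u w e1v) z e1v + fderiv ℝ (fun w => fderiv ℝ u w e2v) z e2v

/-- `Ω` has `C²` boundary: every boundary point has an open neighborhood in which,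
after a rigid motion, `Ω` coincides with the strict epigraph of a `C²` function. -/
def HasC2Boundary (Ω : Set E2) : Prop :=
  ∀ z ∈ frontier Ω, ∃ (φ : E2 ≃ᵢ E2) (f : ℝ → ℝ) (V : Set E2),
    ContDiff ℝ 2 f ∧ IsOpen V ∧ z ∈ V ∧ ∀ w ∈ V, (w ∈ Ω ↔ f (φ w 0) < φ w 1)

/-- `dist_min(A, B) = inf {dist(a, B) : a ∈ A}`. -/
noncomputable def distMin (A B : Set E2) : ℝ := sInf ((fun a => infDist a B) '' A)

/-- The tubular neighbourhood `V_d = {x ∈ Ω : dist(x, ∂Ω) < d}`. -/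
def tub (Ω : Set E2) (d : ℝ) : Set E2 := {x ∈ Ω | infDist x (frontier Ω) < d}

/-- A first eigenpair `(λ, u)` of the open set `U`. -/
def IsFirstEigenpair (U : Set E2) (lam : ℝ) (u : E2 → ℝ) : Prop :=
  0 < lam ∧ Continuous u ∧ (∀ x, x ∉ U → u x = 0) ∧
  ContDiffOn ℝ (⊤ : ℕ∞) u U ∧ (∀ x ∈ U, 0 < u x) ∧
  (∀ x ∈ U, lap u x = -lam * u x) ∧ (∫ x, (u x) ^ 2) = 1

/-- `G` is a continuous extension of `∇u` from `U` to `U ∪ S`. -/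
def GradExt (U : Set E2) (u : E2 → ℝ) (S : Set E2) (G : E2 → E2) : Prop :=
  ContinuousOn G (U ∪ S) ∧ ∀ x ∈ U, G x = gradient u x

/-- Coordinates are normalized for `p`: `0 ∈ ∂Ω` is a nearest point of `∂Ω` to `p`,
the inner unit normal of `∂Ω` at `0` is `e₂` (near `0`, `Ω` is the strict epigraph
of a `C²` function `f` with `f 0 = 0` and `f' 0 = 0`), and `p = (0, d + δ)` where
`d = dist_min(∂Ω, B_δ(p))`. -/
def NormalizedCoords (Ω : Set E2) (p : E2) (δ : ℝ) : Prop :=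
  (0 : E2) ∈ frontier Ω ∧
  infDist p (frontier Ω) = dist p (0 : E2) ∧
  p 0 = 0 ∧ p 1 = distMin (frontier Ω) (ball p δ) + δ ∧
  ∃ (f : ℝ → ℝ) (V : Set E2), ContDiff ℝ 2 f ∧ f 0 = 0 ∧ deriv f 0 = 0 ∧
    IsOpen V ∧ (0 : E2) ∈ V ∧ ∀ w ∈ V, (w ∈ Ω ↔ f (w 0) < w 1)

/-- The outer unit normal of `∂B_δ(p)` at `z`: `ν(z) = (z - p)/δ`. -/
def nuv (p : E2) (δ : ℝ) (z : E2) : E2 := δ⁻¹ • (z - p)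

/-! ### Auxiliary lemmas -/

lemma pt_c0 (a b : ℝ) : pt a b 0 = a := rfl
lemma pt_c1 (a b : ℝ) : pt a b 1 = b := rfl
lemma zero_c0 : (0:E2) 0 = 0 := rfl
lemma zero_c1 : (0:E2) 1 = 0 := rfl

lemma dist_coords (w v : E2) :
    dist w v = Real.sqrt ((w 0 - v 0)^2 + (w 1 - v 1)^2) := by
  rw [EuclideanSpace.dist_eq, Fin.sum_univ_two]
  simp [Real.dist_eq, sq_abs]

lemma coord0_le_dist (w v : E2) : |w 0 - v 0| ≤ dist w v := by
  rw [dist_coords, ← Real.sqrt_sq_eq_abs]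
  exact Real.sqrt_le_sqrt (by nlinarith [sq_nonneg (w 1 - v 1)])

lemma coord1_le_dist (w v : E2) : |w 1 - v 1| ≤ dist w v := by
  rw [dist_coords, ← Real.sqrt_sq_eq_abs]
  exact Real.sqrt_le_sqrt (by nlinarith [sq_nonneg (w 0 - v 0)])

lemma dist_le_of_sq (w v : E2) (B : ℝ) (hB : 0 ≤ B)
    (h : (w 0 - v 0)^2 + (w 1 - v 1)^2 ≤ B^2) : dist w v ≤ B := by
  rw [dist_coords]
  calc Real.sqrt ((w 0 - v 0)^2 + (w 1 - v 1)^2) ≤ Real.sqrt (B^2) :=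
        Real.sqrt_le_sqrt h
    _ = B := Real.sqrt_sq hB

lemma abs_le_of_sq_le (x B : ℝ) (hB : 0 ≤ B) (h : x^2 ≤ B^2) : |x| ≤ B := by
  have := Real.sqrt_le_sqrt h
  rwa [Real.sqrt_sq_eq_abs, Real.sqrt_sq hB] at this

lemma le_abs_of_sq_le (x B : ℝ) (hB : 0 ≤ B) (h : B^2 ≤ x^2) : B ≤ |x| := by
  have h2 := Real.sqrt_le_sqrt h
  rw [Real.sqrt_sq_eq_abs, Real.sqrt_sq_eq_abs] at h2
  exact (le_abs_self B).trans h2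

/-- Quadratic bound for a `C²` function vanishing to first order at `0`. -/
lemma quad_bound {f : ℝ → ℝ} (hf : ContDiff ℝ 2 f) (hf0 : f 0 = 0)
    (hf'0 : deriv f 0 = 0) (r : ℝ) (hr : 0 < r) :
    ∃ C : ℝ, 1 ≤ C ∧ ∀ s : ℝ, |s| ≤ r → |f s| ≤ C * s^2 := by
  have hf' : ContDiff ℝ ((1 : WithTop ℕ∞) + 1) f := by
    convert hf using 2
    exact one_add_one_eq_two
  obtain ⟨hdiff, -, h1⟩ := contDiff_succ_iff_deriv.mp hf'
  obtain ⟨hdiff', hcont⟩ := contDiff_one_iff_deriv.mp h1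
  obtain ⟨K, hK⟩ := (isCompact_Icc (a := -r) (b := r)).exists_bound_of_continuousOn
    hcont.continuousOn
  set C := max K 1 with hC
  have hC1 : (1:ℝ) ≤ C := le_max_right _ _
  have hC0 : (0:ℝ) ≤ C := by linarith
  have hd1 : ∀ s ∈ Icc (-r) r, |deriv f s| ≤ C * |s| := by
    intro s hs
    have h0m : (0:ℝ) ∈ Icc (-r) r := ⟨by linarith, by linarith⟩
    have := Convex.norm_image_sub_le_of_norm_deriv_le
      (f := deriv f) (C := C) (fun x _ => hdiff' x)
      (fun x hx => (hK x hx).trans (le_max_left K 1))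
      (convex_Icc _ _) h0m hs
    simpa [hf'0, Real.norm_eq_abs] using this
  refine ⟨C, hC1, fun s hs => ?_⟩
  have habs : ∀ t ∈ uIcc (0:ℝ) s, |t| ≤ |s| := by
    intro t ht
    rcases mem_uIcc.mp ht with ⟨h1, h2⟩ | ⟨h1, h2⟩
    · rw [abs_of_nonneg h1]; exact h2.trans (le_abs_self s)
    · rw [abs_of_nonpos h2]; exact (neg_le_neg h1).trans (neg_le_abs s)
  have hbound : ∀ t ∈ uIcc (0:ℝ) s, ‖deriv f t‖ ≤ C * |s| := by
    intro t ht
    have htr : t ∈ Icc (-r) r := by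
      have := habs t ht
      exact ⟨by cases abs_le.mp (this.trans hs) with | intro a b => linarith,
        by cases abs_le.mp (this.trans hs) with | intro a b => linarith⟩
    calc ‖deriv f t‖ = |deriv f t| := rfl
      _ ≤ C * |t| := hd1 t htr
      _ ≤ C * |s| := by have := habs t ht; nlinarith
  have := Convex.norm_image_sub_le_of_norm_deriv_le
    (f := f) (fun x _ => hdiff x) hbound (convex_uIcc _ _)
    (left_mem_uIcc) (right_mem_uIcc)
  have h2 : |f s| ≤ C * |s| * |s| := by
    simpa [hf0, Real.norm_eq_abs] using this
  calc |f s| ≤ C * |s| * |s| := h2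
    _ = C * s^2 := by rw [mul_assoc, ← abs_mul, ← sq, abs_of_nonneg (sq_nonneg s)]

set_option maxHeartbeats 8000000 in
theorem statement_5 (Ω : Set E2) (hΩb : Bornology.IsBounded Ω) (hΩo : IsOpen Ω)
    (hΩc : IsConnected Ω) (hΩ2 : HasC2Boundary Ω) :
    ∃ dt > (0:ℝ), ∃ M > (0:ℝ), ∀ d : ℝ, 0 < d → d < dt →
      ∀ δ : ℝ, 0 < δ → ∀ p : E2, p ∈ Ω → closure (ball p δ) ⊆ Ω →
        ball p δ ⊆ tub Ω (d/4) → NormalizedCoords Ω p δ →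
        ∀ x : ℝ, M * x ^ 2 ≤ 3/2 * d →
          pt x (p 1 + δ + 3/2 * d) ∈ Ω ∧
          d ≤ infDist (pt x (p 1 + δ + 3/2 * d)) (frontier Ω) ∧
          infDist (pt x (p 1 + δ + 3/2 * d)) (frontier Ω) < 2 * d := by
  by_cases H : ∃ (f : ℝ → ℝ) (V : Set E2), ContDiff ℝ 2 f ∧ f 0 = 0 ∧ deriv f 0 = 0 ∧
      IsOpen V ∧ (0 : E2) ∈ V ∧ ∀ w ∈ V, (w ∈ Ω ↔ f (w 0) < w 1)
  swap
  · refine ⟨1, one_pos, 1, one_pos, fun d _ _ δ _ p _ _ _ hNC x _ => ?_⟩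
    exact absurd hNC.2.2.2.2 H
  obtain ⟨f, V, hf, hf0, hf'0, hVo, hV0, hiff⟩ := H
  -- radius of the chart
  obtain ⟨r, hr0, hr1, hrV⟩ : ∃ r : ℝ, 0 < r ∧ r ≤ 1 ∧ closedBall (0:E2) r ⊆ V := by
    obtain ⟨r₀, hr₀, hb⟩ := Metric.isOpen_iff.mp hVo 0 hV0
    refine ⟨min (r₀/2) 1, by positivity, min_le_right _ _, ?_⟩
    refine (closedBall_subset_ball ?_).trans hb
    have := min_le_left (r₀/2) 1; linarith
  -- quadratic bound
  obtain ⟨C, hC1, hCf⟩ := quad_bound hf hf0 hf'0 r hr0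
  have hC0 : (0:ℝ) < C := by linarith
  -- frontier facts
  have hFc : IsCompact (frontier Ω) :=
    Metric.isCompact_of_isClosed_isBounded isClosed_frontier
      (hΩb.closure.subset frontier_subset_closure)
  have hproj0 : Continuous (fun w : E2 => w 0) := (EuclideanSpace.proj (0 : Fin 2)).continuous
  have hproj1 : Continuous (fun w : E2 => w 1) := (EuclideanSpace.proj (1 : Fin 2)).continuous
  -- frontier points in V are graph points
  have hfrontier_graph : ∀ b ∈ frontier Ω, b ∈ V → b 1 = f (b 0) := by
    intro b hbF hbV
    rcases lt_trichotomy (f (b 0)) (b 1) with hlt | heq | hgt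
    · exact absurd ((hiff b hbV).mpr hlt) (by
        have := hbF.2; rwa [hΩo.interior_eq] at this)
    · exact heq.symm
    · exfalso
      have hWo : IsOpen (V ∩ {w : E2 | w 1 < f (w 0)}) :=
        hVo.inter (isOpen_lt hproj1 (hf.continuous.comp hproj0))
      have hbW : b ∈ V ∩ {w : E2 | w 1 < f (w 0)} := ⟨hbV, hgt⟩
      obtain ⟨w, hw1, hw2⟩ := mem_closure_iff.mp (hbF.1) _ hWo hbW
      exact absurd ((hiff w hw1.1).mp hw2) (by exact not_lt.mpr hw1.2.le)
  -- graph points in V are frontier points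
  have hgraph_frontier : ∀ s : ℝ, pt s (f s) ∈ V → pt s (f s) ∈ frontier Ω := by
    intro s hsV
    constructor
    · rw [_root_.mem_closure_iff]
      intro O hO hbO
      obtain ⟨ε, hε, hball⟩ := Metric.isOpen_iff.mp (hO.inter hVo) _ ⟨hbO, hsV⟩
      have hmem : pt s (f s + ε/2) ∈ ball (pt s (f s)) ε := by
        rw [mem_ball, dist_coords]
        simp only [pt_c0, pt_c1]
        rw [show s - s = 0 by ring]
        rw [show (f s + ε/2 - f s) = ε/2 by ring]
        rw [show (0:ℝ)^2 + (ε/2)^2 = (ε/2)^2 by ring, Real.sqrt_sq (by linarith)]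
        linarith
      obtain ⟨hwO, hwV⟩ := hball hmem
      exact ⟨pt s (f s + ε/2), hwO, (hiff _ hwV).mpr (by simp [pt_c0, pt_c1]; linarith)⟩
    · rw [hΩo.interior_eq]
      intro hmem
      exact absurd ((hiff _ hsV).mp hmem) (by simp [pt_c0, pt_c1])
  
  -- choose the constants
  refine ⟨min (1/(8*C)) (r^2/16), by positivity, 24*C, by positivity, ?_⟩
  intro d hd hddt δ hδ p hpΩ hclos hball hNC x hx
  obtain ⟨h0F, hinf, hp0, hp1, -⟩ := hNC
  have hFne : (frontier Ω).Nonempty := ⟨0, h0F⟩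
  have hd'0 : 0 ≤ distMin (frontier Ω) (ball p δ) := Real.sInf_nonneg (by
    rintro y ⟨a, -, rfl⟩; exact infDist_nonneg)
  have hp1pos : 0 < p 1 := by rw [hp1]; linarith
  have hdistp0 : dist p (0:E2) = p 1 := by
    rw [dist_coords]; simp only [zero_c0, zero_c1, hp0]
    rw [show (0:ℝ) - 0 = 0 by ring, show p 1 - 0 = p 1 by ring,
      show (0:ℝ)^2 + (p 1)^2 = (p 1)^2 by ring]
    exact Real.sqrt_sq hp1pos.le
  have hp14 : p 1 < d/4 := by
    have := (hball (mem_ball_self hδ)).2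
    rwa [hinf, hdistp0] at this
  have hδp1 : δ ≤ p 1 := by rw [hp1]; linarith
  have hdtC : d < 1/(8*C) := lt_of_lt_of_le hddt (min_le_left _ _)
  have hdtr : d < r^2/16 := lt_of_lt_of_le hddt (min_le_right _ _)
  have hr2 : r^2 ≤ r := by nlinarith
  have hdC8 : d * (8*C) < 1 := (lt_div_iff₀ (by positivity)).mp hdtC
  have hx2 : C * x^2 ≤ d/16 := by nlinarith
  have hxx : x^2 ≤ d/16 := by
    nlinarith [mul_nonneg (by linarith : (0:ℝ) ≤ C - 1) (sq_nonneg x)]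
  have hxr : |x| ≤ r/4 := abs_le_of_sq_le x (r/4) (by positivity) (by nlinarith)
  -- key estimate : p 1 + δ ≤ d/4
  have hkey : p 1 + δ ≤ d/4 := by
    set a := p 1 + δ with ha
    have ha0 : 0 < a := by rw [ha]; linarith
    have halt : a < d/2 := by rw [ha]; linarith
    have hq4 : infDist (pt 0 a) (frontier Ω) ≤ d/4 := by
      apply le_of_forall_pos_le_add
      intro ε hε
      set t := δ - min ε δ / 2 with ht
      have hmin : 0 < min ε δ := lt_min hε hδ
      have hminδ : min ε δ ≤ δ := min_le_right _ _
      have ht0 : 0 < t := by rw [ht]; linarith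
      have htδ : t < δ := by rw [ht]; linarith
      have hmem : pt 0 (p 1 + t) ∈ ball p δ := by
        rw [mem_ball, dist_coords]
        simp only [pt_c0, pt_c1, hp0]
        rw [show (0:ℝ) - 0 = 0 by ring, show p 1 + t - p 1 = t by ring,
          show (0:ℝ)^2 + t^2 = t^2 by ring, Real.sqrt_sq ht0.le]
        exact htδ
      have h3 := (hball hmem).2
      have h4 : dist (pt 0 a) (pt 0 (p 1 + t)) = min ε δ / 2 := by
        rw [dist_coords]
        simp only [pt_c0, pt_c1]
        rw [show (0:ℝ) - 0 = 0 by ring,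
          show a - (p 1 + t) = min ε δ / 2 by rw [ha, ht]; ring,
          show (0:ℝ)^2 + (min ε δ/2)^2 = (min ε δ/2)^2 by ring,
          Real.sqrt_sq (by linarith)]
      calc infDist (pt 0 a) (frontier Ω)
          ≤ infDist (pt 0 (p 1 + t)) (frontier Ω) + dist (pt 0 a) (pt 0 (p 1 + t)) :=
            infDist_le_infDist_add_dist
        _ ≤ d/4 + ε := by rw [h4]; have := min_le_left ε δ; linarith
    obtain ⟨b, hbF, hbd⟩ := hFc.exists_infDist_eq_dist hFne (pt 0 a)
    have hdb : dist (pt 0 a) b ≤ d/4 := by rw [← hbd]; exact hq4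
    have hb0 : dist b (0:E2) ≤ r := by
      have h5 : dist (pt 0 a) (0:E2) = a := by
        rw [dist_coords]
        simp only [pt_c0, pt_c1, zero_c0, zero_c1]
        rw [show (0:ℝ) - 0 = 0 by ring, show a - 0 = a by ring,
          show (0:ℝ)^2 + a^2 = a^2 by ring]
        exact Real.sqrt_sq ha0.le
      calc dist b (0:E2) ≤ dist b (pt 0 a) + dist (pt 0 a) (0:E2) := dist_triangle _ _ _
        _ = dist (pt 0 a) b + a := by rw [dist_comm, h5]
        _ ≤ d/4 + d/2 := by linarith
        _ ≤ r := by linarith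
    have hbV : b ∈ V := hrV (mem_closedBall.mpr hb0)
    have hbg : b 1 = f (b 0) := hfrontier_graph b hbF hbV
    have hsr : |b 0| ≤ r := by
      have h6 := coord0_le_dist b (0:E2)
      rw [zero_c0, sub_zero] at h6
      exact h6.trans hb0
    have hfs' : f (b 0) ≤ C * (b 0)^2 := (abs_le.mp (hCf (b 0) hsr)).2
    have h2aC : 2*a*C ≤ 1 := by
      have hac := mul_lt_mul_of_pos_right halt hC0
      nlinarith
    have hge : a ≤ dist (pt 0 a) b := by
      rw [dist_coords]
      simp only [pt_c0, pt_c1]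
      rw [hbg]
      apply (Real.le_sqrt ha0.le (by positivity)).mpr
      nlinarith [mul_nonneg ha0.le (sub_nonneg.mpr hfs'), sq_nonneg (f (b 0)),
        mul_nonneg (sq_nonneg (b 0)) (by linarith : (0:ℝ) ≤ 1 - 2*a*C)]
    linarith [hge.trans hdb]
  -- bounds on the height
  have hy1ub : p 1 + δ + 3/2*d ≤ 7*d/4 := by linarith
  have hy1lb : 3/2*d < p 1 + δ + 3/2*d := by linarith
  have hfxb : |f x| ≤ C * x^2 := hCf x (by linarith)
  have hfx16 : |f x| ≤ d/16 := hfxb.trans hx2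
  have hfx16' := abs_le.mp hfx16
  -- z is close to the origin
  have hdz0 : dist (pt x (p 1 + δ + 3/2*d)) (0:E2) ≤ r/2 := by
    apply dist_le_of_sq _ _ _ (by positivity)
    simp only [pt_c0, pt_c1, zero_c0, zero_c1, sub_zero]
    have hA : x^2 ≤ r^2/256 := by nlinarith
    have hB : (p 1 + δ + 3/2*d)^2 ≤ r^2/64 := by nlinarith
    nlinarith
  have hzV : pt x (p 1 + δ + 3/2*d) ∈ V := hrV (mem_closedBall.mpr (by linarith))
  -- Goal 1 : z ∈ Ω
  have hgoal1 : pt x (p 1 + δ + 3/2*d) ∈ Ω := by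
    apply (hiff _ hzV).mpr
    simp only [pt_c0, pt_c1]
    linarith [hfx16'.2]
  -- Goal 3 : infDist < 2d
  have hbbV : pt x (f x) ∈ V := by
    apply hrV
    rw [mem_closedBall]
    apply dist_le_of_sq _ _ r hr0.le
    simp only [pt_c0, pt_c1, zero_c0, zero_c1, sub_zero]
    have hA : x^2 ≤ r^2/256 := by nlinarith
    have hB : (f x)^2 ≤ r^2/64 := by nlinarith [hfx16'.1, hfx16'.2]
    nlinarith
  have hbbF : pt x (f x) ∈ frontier Ω := hgraph_frontier x hbbV
  have hgoal3 : infDist (pt x (p 1 + δ + 3/2*d)) (frontier Ω) < 2*d := by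
    have hle := infDist_le_dist_of_mem (x := pt x (p 1 + δ + 3/2*d)) hbbF
    have hdzb : dist (pt x (p 1 + δ + 3/2*d)) (pt x (f x)) = |p 1 + δ + 3/2*d - f x| := by
      rw [dist_coords]
      simp only [pt_c0, pt_c1]
      rw [show x - x = 0 by ring,
        show (0:ℝ)^2 + (p 1 + δ + 3/2*d - f x)^2 = (p 1 + δ + 3/2*d - f x)^2 by ring,
        Real.sqrt_sq_eq_abs]
    rw [hdzb] at hle
    have habs : |p 1 + δ + 3/2*d - f x| = p 1 + δ + 3/2*d - f x := by
      rw [abs_of_nonneg]; linarith [hfx16'.2]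
    rw [habs] at hle
    linarith [hfx16'.1]
  -- Goal 2 : d ≤ infDist
  have hgoal2 : d ≤ infDist (pt x (p 1 + δ + 3/2*d)) (frontier Ω) := by
    obtain ⟨b, hbF, hbd⟩ := hFc.exists_infDist_eq_dist hFne (pt x (p 1 + δ + 3/2*d))
    rw [hbd]
    by_cases hbr : dist b (0:E2) ≤ r
    · have hbV : b ∈ V := hrV (mem_closedBall.mpr hbr)
      have hbg : b 1 = f (b 0) := hfrontier_graph b hbF hbV
      have hsr : |b 0| ≤ r := by
        have h6 := coord0_le_dist b (0:E2)
        rw [zero_c0, sub_zero] at h6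
        exact h6.trans hbr
      have hfsb := abs_le.mp (hCf (b 0) hsr)
      by_cases hcase : f (b 0) ≤ d/2
      · have h2 := coord1_le_dist (pt x (p 1 + δ + 3/2*d)) b
        simp only [pt_c1] at h2
        have h3 : d ≤ p 1 + δ + 3/2*d - b 1 := by rw [hbg]; linarith
        have h4 : p 1 + δ + 3/2*d - b 1 ≤ |p 1 + δ + 3/2*d - b 1| := le_abs_self _
        linarith
      · push_neg at hcase
        have hs2 : d < 2*C*(b 0)^2 := by nlinarith [hfsb.2]
        have hx2s' : x^2*(16*C) ≤ d := by nlinarith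
        have hx8 : 8*x^2 ≤ (b 0)^2 := by nlinarith [hx2s', hs2, hC0]
        have hq1 : 4*d^2 ≤ (b 0)^2 := by
          nlinarith [mul_lt_mul_of_pos_left hs2 hd,
            mul_le_mul_of_nonneg_right hdC8.le (sq_nonneg (b 0))]
        have hq2 : (b 0)^2 ≤ 4*(x - b 0)^2 := by
          nlinarith [sq_nonneg (b 0 - 2*x), hx8]
        have hxs : d^2 ≤ (x - b 0)^2 := by linarith
        have h7 := coord0_le_dist (pt x (p 1 + δ + 3/2*d)) b
        simp only [pt_c0] at h7
        have h8 : d ≤ |x - b 0| := le_abs_of_sq_le _ _ hd.le hxs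
        linarith
    · push_neg at hbr
      have h9 := dist_triangle b (pt x (p 1 + δ + 3/2*d)) (0:E2)
      rw [dist_comm b (pt x (p 1 + δ + 3/2*d))] at h9
      nlinarith [hdz0]
  exact ⟨hgoal1, hgoal2, hgoal3⟩
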